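/- Let α > −1, 2 < p < ∞, φ(p) = (p−2)/(p−1), and let w ∈ B_{p,α}. For any nonnegative measurable h on the upper half plane, the pair of weights (h w, S_{w,α}(h) w) satisfies the joint B_{2,α} condition with B_{2,α}(h w, S_{w,α}(h) w) ≤ B_{p,α}(w)^{1/(p−1)}, where S_{w,α}(h) = (M_α(h^{1/φ(p)} w)/w)^{φ(p)}. -/

import Mathlib

open MeasureTheory ENNReal

noncomputable section

/-- The upper half plane. -/
def UHP : Set ℂ := {z | 0 < z.im}

/-- The measure `dA_α = (Im z)^α dA` on the upper half plane. -/
def measA (α : ℝ) : Measure ℂ :=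
  (volume.restrict UHP).withDensity fun z => ENNReal.ofReal (z.im ^ α)

/-- The Carleson box `Q_{[a,b)} = [a,b) × (0, b-a]`. -/
def cbox (a b : ℝ) : Set ℂ := {z | a ≤ z.re ∧ z.re < b ∧ 0 < z.im ∧ z.im ≤ b - a}

/-- The maximal function `M_α f(z) = sup_{I : z ∈ Q_I} |Q_I|_α^{-1} ∫_{Q_I} f dA_α`
(on nonnegative functions). -/
def maxA (α : ℝ) (f : ℂ → ℝ≥0∞) (z : ℂ) : ℝ≥0∞ :=
  ⨆ (a : ℝ) (b : ℝ) (_ : a < b) (_ : z ∈ cbox a b),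
    (∫⁻ ξ in cbox a b, f ξ ∂measA α) / measA α (cbox a b)

/-- The operator `S_{w,α}(h) = (M_α(h^{1/φ(p)} w)/w)^{φ(p)}` with `φ(p) = (p-2)/(p-1)`. -/
def Sop (α p : ℝ) (w : ℂ → ℝ) (h : ℂ → ℝ≥0∞) (z : ℂ) : ℝ≥0∞ :=
  ((maxA α (fun ξ => h ξ ^ (1 / ((p - 2) / (p - 1))) * ENNReal.ofReal (w ξ)) z) /
      ENNReal.ofReal (w z)) ^ ((p - 2) / (p - 1))

lemma cbox_measurable (a b : ℝ) : MeasurableSet (cbox a b) := by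
  have : cbox a b = Complex.re ⁻¹' Set.Ico a b ∩ Complex.im ⁻¹' Set.Ioc 0 (b - a) := by
    ext z; simp [cbox, Set.mem_Ico, Set.mem_Ioc, and_assoc]
  rw [this]
  exact (measurableSet_Ico.preimage Complex.measurable_re).inter
    (measurableSet_Ioc.preimage Complex.measurable_im)

lemma ennreal_rpow_ne_zero {x : ℝ≥0∞} (hx0 : x ≠ 0) (hxt : x ≠ ⊤) (s : ℝ) : x ^ s ≠ 0 :=
  (ENNReal.rpow_pos hx0.bot_lt hxt).ne'

lemma ennreal_rpow_ne_top {x : ℝ≥0∞} (hx0 : x ≠ 0) (hxt : x ≠ ⊤) (s : ℝ) : x ^ s ≠ ⊤ := by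
  intro hc
  rcases ENNReal.rpow_eq_top_iff.mp hc with ⟨h, _⟩ | ⟨h, _⟩
  exacts [hx0 h, hxt h]

lemma ennreal_inv_rpow_mul_self {x : ℝ≥0∞} (hx0 : x ≠ 0) (hxt : x ≠ ⊤) (s : ℝ) :
    (x ^ s)⁻¹ * x = x ^ (1 - s) := by
  have h1 : x ^ (1 - s) * x ^ s = x := by
    rw [← ENNReal.rpow_add _ _ hx0 hxt, show (1 - s) + s = 1 by ring, ENNReal.rpow_one]
  calc (x ^ s)⁻¹ * x = (x ^ s)⁻¹ * (x ^ (1 - s) * x ^ s) := by rw [h1]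
    _ = x ^ (1 - s) * (x ^ s * (x ^ s)⁻¹) := by ring
    _ = x ^ (1 - s) := by
        rw [ENNReal.mul_inv_cancel (ennreal_rpow_ne_zero hx0 hxt s)
          (ennreal_rpow_ne_top hx0 hxt s), mul_one]

lemma lintegral_inv_const_mul_le {X : Type*} [MeasurableSpace X] (μ : Measure X) {c : ℝ≥0∞}
    (hc0 : c ≠ 0) (hct : c ≠ ⊤) (F : X → ℝ≥0∞) :
    ∫⁻ z, c⁻¹ * F z ∂μ ≤ c⁻¹ * ∫⁻ z, F z ∂μ := by
  have h1 := lintegral_const_mul_le (μ := μ) c fun z => c⁻¹ * F z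
  have h2 : ∫⁻ z, c * (c⁻¹ * F z) ∂μ = ∫⁻ z, F z ∂μ := by
    refine lintegral_congr fun z => ?_
    rw [← mul_assoc, ENNReal.mul_inv_cancel hc0 hct, one_mul]
  rw [h2] at h1
  calc ∫⁻ z, c⁻¹ * F z ∂μ = c⁻¹ * (c * ∫⁻ z, c⁻¹ * F z ∂μ) := by
        rw [← mul_assoc, ENNReal.inv_mul_cancel hc0 hct, one_mul]
    _ ≤ c⁻¹ * ∫⁻ z, F z ∂μ := mul_le_mul_right h1 _

lemma final_algebra {GG W V μQ B : ℝ≥0∞} {q pp : ℝ} (hq0 : 0 < q) (hq1 : q < 1)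
    (hGG0 : GG ≠ 0) (hGGt : GG ≠ ⊤) (hμ0 : μQ ≠ 0) (hμt : μQ ≠ ⊤)
    (hpq : 1 - q = 1 / (pp - 1)) (hpp : pp - 1 ≠ 0)
    (hB : W / μQ * ((V / μQ) ^ (pp - 1)) ≤ B) :
    GG ^ q * W ^ (1 - q) / μQ * (((GG / μQ) ^ q)⁻¹ * V / μQ) ≤ B ^ (1 / (pp - 1)) := by
  have h1q0 : (0:ℝ) < 1 - q := by linarith
  have hr0 : (0:ℝ) ≤ 1 / (pp - 1) := by rw [← hpq]; linarith
  have hGq0 : GG ^ q ≠ 0 := ennreal_rpow_ne_zero hGG0 hGGt q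
  have hGqt : GG ^ q ≠ ⊤ := ennreal_rpow_ne_top hGG0 hGGt q
  have hμ0' : μQ⁻¹ ≠ 0 := ENNReal.inv_ne_zero.mpr hμt
  have hμt' : μQ⁻¹ ≠ ⊤ := ENNReal.inv_ne_top.mpr hμ0
  have hKr : (W / μQ * ((V / μQ) ^ (pp - 1))) ^ ((1:ℝ) / (pp - 1)) ≤ B ^ ((1:ℝ) / (pp - 1)) :=
    ENNReal.rpow_le_rpow hB hr0
  have hKeq : (W / μQ * ((V / μQ) ^ (pp - 1))) ^ ((1:ℝ) / (pp - 1))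
      = (W / μQ) ^ (1 - q) * (V / μQ) := by
    rw [ENNReal.mul_rpow_of_nonneg _ _ hr0, ← ENNReal.rpow_mul, mul_one_div_cancel hpp,
      ENNReal.rpow_one, hpq]
  refine le_trans (le_of_eq ?_) (hKeq ▸ hKr)
  simp only [div_eq_mul_inv]
  rw [ENNReal.mul_rpow_of_nonneg GG μQ⁻¹ hq0.le, ENNReal.mul_inv (Or.inl hGq0) (Or.inl hGqt),
    ENNReal.mul_rpow_of_nonneg W μQ⁻¹ h1q0.le]
  have h1 : GG ^ q * (GG ^ q)⁻¹ = 1 := ENNReal.mul_inv_cancel hGq0 hGqt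
  have h2 : ((μQ⁻¹) ^ q)⁻¹ * μQ⁻¹ = (μQ⁻¹) ^ (1 - q) := ennreal_inv_rpow_mul_self hμ0' hμt' q
  trans (GG ^ q * (GG ^ q)⁻¹) * (((μQ⁻¹) ^ q)⁻¹ * μQ⁻¹) * (W ^ (1 - q) * (V * μQ⁻¹))
  · ring
  · rw [h1, h2, one_mul]; ring

/-- for `2 < p` and `w ∈ B_{p,α}` with constant `B`, and any nonnegative
measurable `h`, the pair `(h w, S_{w,α}(h) w)` satisfies the joint `B_{2,α}` condition with
constant at most `B^{1/(p-1)}`. -/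
theorem joint_B2_bound (α p : ℝ) (hα : -1 < α) (hp : 2 < p)
    (w : ℂ → ℝ) (hw : ∀ z, 0 < w z) (B : ℝ≥0∞)
    (hB : ∀ a b : ℝ, a < b →
      ((∫⁻ z in cbox a b, ENNReal.ofReal (w z) ∂measA α) / measA α (cbox a b)) *
          (((∫⁻ z in cbox a b, (ENNReal.ofReal (w z)) ^ (1 - p / (p - 1)) ∂measA α) /
            measA α (cbox a b)) ^ (p - 1)) ≤ B)
    (h : ℂ → ℝ≥0∞) (hmeas : Measurable h) :
    ∀ a b : ℝ, a < b →
      ((∫⁻ z in cbox a b, h z * ENNReal.ofReal (w z) ∂measA α) / measA α (cbox a b)) *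
          ((∫⁻ z in cbox a b, (Sop α p w h z * ENNReal.ofReal (w z))⁻¹ ∂measA α) /
            measA α (cbox a b)) ≤ B ^ (1 / (p - 1)) := by
  intro a b hab
  have hp1 : (0:ℝ) < p - 1 := by linarith
  have hp1' : (p:ℝ) - 1 ≠ 0 := ne_of_gt hp1
  have hrpos : (0:ℝ) < 1 / (p - 1) := by positivity
  set q : ℝ := (p - 2) / (p - 1) with hqdef
  have hq0 : 0 < q := div_pos (by linarith) hp1
  have hq1 : q < 1 := (div_lt_one hp1).mpr (by linarith)
  have h1q0 : (0:ℝ) < 1 - q := by linarith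
  have h1q : 1 - q = 1 / (p - 1) := by rw [hqdef]; field_simp; norm_num
  have hexp : 1 - p / (p - 1) = -(1 - q) := by rw [hqdef]; field_simp; ring
  rcases eq_or_ne B ⊤ with hBtop | hBne
  · rw [hBtop, ENNReal.top_rpow_of_pos hrpos]; exact le_top
  set μQ := measA α (cbox a b) with hμQ
  rcases eq_or_ne μQ 0 with hμ0 | hμ0
  · rw [hμQ] at hμ0
    have hres : (measA α).restrict (cbox a b) = 0 := Measure.restrict_eq_zero.mpr hμ0
    rw [hres]
    simp
  rcases eq_or_ne μQ ⊤ with hμt | hμt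
  · rw [hμt]
    simp [ENNReal.div_top]
  set ν := (measA α).restrict (cbox a b) with hν
  set g : ℂ → ℝ≥0∞ := fun z => h z ^ (1 / q) * ENNReal.ofReal (w z) with hg
  have hwz0 : ∀ z : ℂ, ENNReal.ofReal (w z) ≠ 0 := fun z => (ENNReal.ofReal_pos.mpr (hw z)).ne'
  have hwzt : ∀ z : ℂ, ENNReal.ofReal (w z) ≠ ⊤ := fun z => ENNReal.ofReal_ne_top
  -- key pointwise bound on the box
  have key : ∀ z ∈ cbox a b,
      (Sop α p w h z * ENNReal.ofReal (w z))⁻¹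
        ≤ (((∫⁻ ξ, g ξ ∂ν) / μQ) ^ q * (ENNReal.ofReal (w z)) ^ (1 - q))⁻¹ := by
    intro z hz
    apply ENNReal.inv_le_inv'
    have hM : (∫⁻ ξ, g ξ ∂ν) / μQ ≤ maxA α g z := by
      have : (∫⁻ ξ in cbox a b, g ξ ∂measA α) / measA α (cbox a b) ≤ maxA α g z := by
        simp only [maxA]
        exact le_iSup_of_le a (le_iSup_of_le b (le_iSup_of_le hab (le_iSup_of_le hz le_rfl)))
      exact this
    have hstep : (((∫⁻ ξ, g ξ ∂ν) / μQ) / ENNReal.ofReal (w z)) ^ q * ENNReal.ofReal (w z)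
        = ((∫⁻ ξ, g ξ ∂ν) / μQ) ^ q * (ENNReal.ofReal (w z)) ^ (1 - q) := by
      rw [ENNReal.div_rpow_of_nonneg _ _ hq0.le, div_eq_mul_inv, mul_assoc,
        ennreal_inv_rpow_mul_self (hwz0 z) (hwzt z) q]
    calc ((∫⁻ ξ, g ξ ∂ν) / μQ) ^ q * (ENNReal.ofReal (w z)) ^ (1 - q)
        = (((∫⁻ ξ, g ξ ∂ν) / μQ) / ENNReal.ofReal (w z)) ^ q * ENNReal.ofReal (w z) :=
          hstep.symm
      _ ≤ (maxA α g z / ENNReal.ofReal (w z)) ^ q * ENNReal.ofReal (w z) :=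
          mul_le_mul_left (ENNReal.rpow_le_rpow (ENNReal.div_le_div_right hM _) hq0.le) _
      _ = Sop α p w h z * ENNReal.ofReal (w z) := by
          simp only [Sop]
          rfl
  have hI2le : (∫⁻ z, (Sop α p w h z * ENNReal.ofReal (w z))⁻¹ ∂ν)
      ≤ ∫⁻ z, (((∫⁻ ξ, g ξ ∂ν) / μQ) ^ q * (ENNReal.ofReal (w z)) ^ (1 - q))⁻¹ ∂ν := by
    refine lintegral_mono_ae ?_
    exact (ae_restrict_iff' (cbox_measurable a b)).mpr (ae_of_all _ key)
  rcases eq_or_ne (∫⁻ ξ, g ξ ∂ν) ⊤ with hIGt | hIGne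
  · -- second factor vanishes
    have hz0 : ∀ z : ℂ,
        (((∫⁻ ξ, g ξ ∂ν) / μQ) ^ q * (ENNReal.ofReal (w z)) ^ (1 - q))⁻¹ = 0 := by
      intro z
      rw [hIGt, ENNReal.top_div_of_ne_top hμt, ENNReal.top_rpow_of_pos hq0,
        ENNReal.top_mul (ennreal_rpow_ne_zero (hwz0 z) (hwzt z) _), ENNReal.inv_top]
    have hI20 : (∫⁻ z, (Sop α p w h z * ENNReal.ofReal (w z))⁻¹ ∂ν) = 0 := by
      refine le_antisymm (le_trans hI2le ?_) zero_le
      simp only [hz0]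
      simp
    rw [hI20, ENNReal.zero_div, mul_zero]
    exact zero_le
  -- `h` is a.e. finite on the box
  have hhfin : ∀ᵐ z ∂ν, h z ≠ ⊤ := by
    have hSm : MeasurableSet {z : ℂ | h z = ⊤} := hmeas (measurableSet_singleton ⊤)
    rw [ae_iff]
    simp only [ne_eq, not_not]
    by_contra hne
    apply hIGne
    have hle : ∀ z, Set.indicator {z : ℂ | h z = ⊤} (fun _ => (⊤:ℝ≥0∞)) z ≤ g z := by
      intro z
      by_cases hzS : h z = ⊤
      · rw [Set.indicator_of_mem (by exact hzS), hg]
        simp only []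
        rw [hzS, ENNReal.top_rpow_of_pos (one_div_pos.mpr hq0), ENNReal.top_mul (hwz0 z)]
      · rw [Set.indicator_of_notMem (by exact hzS)]
        exact zero_le
    have hmono := lintegral_mono (μ := ν) hle
    rw [lintegral_indicator_const hSm, ENNReal.top_mul hne] at hmono
    exact top_le_iff.mp hmono
  -- Hölder inequality via a measurable minorant
  obtain ⟨φ, hφm, hφle, hφeq⟩ :=
    exists_measurable_le_lintegral_eq ν fun z => h z * ENNReal.ofReal (w z)
  set w₁ : ℂ → ℝ≥0∞ := fun z => if h z = 0 ∨ h z = ⊤ then 0 else φ z / h z with hw₁def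
  have hcondm : MeasurableSet {z : ℂ | h z = 0 ∨ h z = ⊤} := by
    rw [Set.setOf_or]
    exact (hmeas (measurableSet_singleton 0)).union (hmeas (measurableSet_singleton ⊤))
  have hw₁m : Measurable w₁ := Measurable.ite hcondm measurable_const (hφm.div hmeas)
  have hw₁le : ∀ z, w₁ z ≤ ENNReal.ofReal (w z) := by
    intro z
    rw [hw₁def]
    simp only []
    split_ifs with hcond
    · exact zero_le
    · exact ENNReal.div_le_of_le_mul (by rw [mul_comm]; exact hφle z)
  have hhw₁ : ∀ᵐ z ∂ν, h z * w₁ z = φ z := by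
    filter_upwards [hhfin] with z hzt
    rw [hw₁def]
    simp only []
    by_cases h0 : h z = 0
    · have hφ0 : φ z = 0 := le_antisymm (by simpa [h0] using hφle z) zero_le
      simp [h0, hφ0]
    · rw [if_neg (by push_neg; exact ⟨h0, hzt⟩)]
      exact ENNReal.mul_div_cancel' (fun h' => absurd h' h0) (fun h' => absurd h' hzt)
  have hq1q : (1:ℝ) - q ≠ 0 := ne_of_gt h1q0
  have hconj : Real.HolderConjugate (1 / q) (1 / (1 - q)) := by
    rw [Real.holderConjugate_iff]
    constructor
    · exact (one_lt_div hq0).mpr hq1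
    · rw [one_div, one_div, inv_inv, inv_inv]; ring
  have hF : Measurable fun z => (h z ^ (1 / q) * w₁ z) ^ q :=
    ((hmeas.pow_const _).mul hw₁m).pow_const _
  have hGf : Measurable fun z => w₁ z ^ (1 - q) := hw₁m.pow_const _
  have e1 : ∀ z : ℂ, (h z ^ (1 / q) * w₁ z) ^ q * w₁ z ^ (1 - q) = h z * w₁ z := by
    intro z
    rw [ENNReal.mul_rpow_of_nonneg _ _ hq0.le, ← ENNReal.rpow_mul,
      one_div_mul_cancel hq0.ne', ENNReal.rpow_one, mul_assoc,
      ← ENNReal.rpow_add_of_nonneg _ _ hq0.le h1q0.le, show q + (1 - q) = 1 by ring,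
      ENNReal.rpow_one]
  have e2 : ∀ z : ℂ, ((h z ^ (1 / q) * w₁ z) ^ q) ^ ((1:ℝ) / q) = h z ^ (1 / q) * w₁ z := by
    intro z
    rw [← ENNReal.rpow_mul, mul_one_div_cancel hq0.ne', ENNReal.rpow_one]
  have e3 : ∀ z : ℂ, (w₁ z ^ (1 - q)) ^ ((1:ℝ) / (1 - q)) = w₁ z := by
    intro z
    rw [← ENNReal.rpow_mul, mul_one_div_cancel hq1q, ENNReal.rpow_one]
  have hIH_le : (∫⁻ z, h z * ENNReal.ofReal (w z) ∂ν)
      ≤ (∫⁻ ξ, g ξ ∂ν) ^ q * (∫⁻ z, ENNReal.ofReal (w z) ∂ν) ^ (1 - q) := by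
    have hHold' : (∫⁻ z, ((h z ^ (1 / q) * w₁ z) ^ q) * (w₁ z ^ (1 - q)) ∂ν)
        ≤ (∫⁻ z, ((h z ^ (1 / q) * w₁ z) ^ q) ^ ((1:ℝ) / q) ∂ν) ^ q *
          (∫⁻ z, (w₁ z ^ (1 - q)) ^ ((1:ℝ) / (1 - q)) ∂ν) ^ (1 - q) := by
      have hh := ENNReal.lintegral_mul_le_Lp_mul_Lq ν hconj hF.aemeasurable hGf.aemeasurable
      rw [one_div_one_div, one_div_one_div] at hh
      exact hh
    calc (∫⁻ z, h z * ENNReal.ofReal (w z) ∂ν)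
        = ∫⁻ z, φ z ∂ν := hφeq
      _ = ∫⁻ z, h z * w₁ z ∂ν := (lintegral_congr_ae hhw₁).symm
      _ = ∫⁻ z, ((h z ^ (1 / q) * w₁ z) ^ q) * (w₁ z ^ (1 - q)) ∂ν := (lintegral_congr e1).symm
      _ ≤ (∫⁻ z, ((h z ^ (1 / q) * w₁ z) ^ q) ^ ((1:ℝ) / q) ∂ν) ^ q *
          (∫⁻ z, (w₁ z ^ (1 - q)) ^ ((1:ℝ) / (1 - q)) ∂ν) ^ (1 - q) := hHold'
      _ = (∫⁻ z, h z ^ (1 / q) * w₁ z ∂ν) ^ q * (∫⁻ z, w₁ z ∂ν) ^ (1 - q) := by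
          rw [lintegral_congr e2, lintegral_congr e3]
      _ ≤ (∫⁻ ξ, g ξ ∂ν) ^ q * (∫⁻ z, ENNReal.ofReal (w z) ∂ν) ^ (1 - q) := by
          refine mul_le_mul' (ENNReal.rpow_le_rpow ?_ hq0.le) (ENNReal.rpow_le_rpow ?_ h1q0.le)
          · refine lintegral_mono fun z => ?_
            rw [hg]
            exact mul_le_mul_right (hw₁le z) _
          · exact lintegral_mono fun z => hw₁le z
  rcases eq_or_ne (∫⁻ ξ, g ξ ∂ν) 0 with hIG0 | hIG0
  · -- first factor vanishes
    have hIH0 : (∫⁻ z, h z * ENNReal.ofReal (w z) ∂ν) = 0 := by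
      refine le_antisymm ?_ zero_le
      have := hIH_le
      rw [hIG0, ENNReal.zero_rpow_of_pos hq0, zero_mul] at this
      exact this
    rw [hIH0, ENNReal.zero_div, zero_mul]
    exact zero_le
  -- main case
  have hA0 : (∫⁻ ξ, g ξ ∂ν) / μQ ≠ 0 := by
    simp [ENNReal.div_eq_zero_iff, hIG0, hμt]
  have hAt : (∫⁻ ξ, g ξ ∂ν) / μQ ≠ ⊤ := by
    intro hcon
    rcases ENNReal.div_eq_top.mp hcon with ⟨_, h2⟩ | ⟨h1, _⟩
    exacts [hμ0 h2, hIGne h1]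
  have hcne0 : (((∫⁻ ξ, g ξ ∂ν) / μQ) ^ q) ≠ 0 := ennreal_rpow_ne_zero hA0 hAt q
  have hcnet : (((∫⁻ ξ, g ξ ∂ν) / μQ) ^ q) ≠ ⊤ := ennreal_rpow_ne_top hA0 hAt q
  have hI2_le : (∫⁻ z, (Sop α p w h z * ENNReal.ofReal (w z))⁻¹ ∂ν)
      ≤ (((∫⁻ ξ, g ξ ∂ν) / μQ) ^ q)⁻¹ *
        ∫⁻ z, (ENNReal.ofReal (w z)) ^ (1 - p / (p - 1)) ∂ν := by
    refine le_trans hI2le ?_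
    have hptw : ∀ z : ℂ,
        (((∫⁻ ξ, g ξ ∂ν) / μQ) ^ q * (ENNReal.ofReal (w z)) ^ (1 - q))⁻¹
          = (((∫⁻ ξ, g ξ ∂ν) / μQ) ^ q)⁻¹ * ((ENNReal.ofReal (w z)) ^ (1 - p / (p - 1))) := by
      intro z
      rw [ENNReal.mul_inv (Or.inl hcne0) (Or.inl hcnet), hexp, ENNReal.rpow_neg]
    rw [lintegral_congr hptw]
    exact lintegral_inv_const_mul_le ν hcne0 hcnet _
  have hB' : ((∫⁻ z, ENNReal.ofReal (w z) ∂ν) / μQ) *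
      (((∫⁻ z, (ENNReal.ofReal (w z)) ^ (1 - p / (p - 1)) ∂ν) / μQ) ^ (p - 1)) ≤ B :=
    hB a b hab
  refine le_trans (mul_le_mul' (ENNReal.div_le_div_right hIH_le μQ)
    (ENNReal.div_le_div_right hI2_le μQ)) ?_
  exact final_algebra hq0 hq1 hIG0 hIGne hμ0 hμt h1q hp1' hB'
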